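/- Let 0 < p < 1 and p < q ≤ 2 be reals and n ≥ 2, let J_n ∈ ℝ^{n×n} be the all-ones matrix, and set A = I + n^{1/q−1}·J_n. Then for every ε with n^{−(1/p − 1/q)} < ε and ε^p ≤ 1 − 2^{−p}: the identity I satisfies ‖A − I‖_{S_p} ≤ 2ε‖A‖_{S_p} (Schatten p-quasinorm) and nnz(I) = n; moreover, if 1 ≤ q ≤ 2 then every Ã ∈ ℝ^{n×n} with ‖A − Ã‖_{S_q} ≤ 0.1‖A‖_{S_q} satisfies nnz(Ã) ≥ 0.96·n² − n, and if 0 < q < 1 then every Ã ∈ ℝ^{n×n} with ‖A − Ã‖_{S_q} ≤ 2^{−1/q}·0.1·‖A‖_{S_q} satisfies nnz(Ã) ≥ 0.96·n² − n. -/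

import Mathlib

open scoped BigOperators ENNReal
open Matrix

/-- Number of nonzero entries of a vector. -/
noncomputable def nnzv {n : ℕ} (x : Fin n → ℝ) : ℕ :=
  (Finset.univ.filter fun i => x i ≠ 0).card

/-- The ℓ_p norm of a vector, for a real exponent `p`. -/
noncomputable def lpNorm {n : ℕ} (p : ℝ) (x : Fin n → ℝ) : ℝ :=
  (∑ i, |x i| ^ p) ^ (1 / p)

/-- `IsHead x c y` : `y` is obtained from `x` by keeping (at most) `c` entries that are
largest in absolute value (exactly `min c n` of them, ties broken arbitrarily) and zeroing out the rest. -/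
def IsHead {n : ℕ} (x : Fin n → ℝ) (c : ℕ) (y : Fin n → ℝ) : Prop :=
  ∃ T : Finset (Fin n), T.card = min c n ∧ (∀ i ∈ T, y i = x i) ∧ (∀ i ∉ T, y i = 0) ∧
    ∀ i ∈ T, ∀ j ∉ T, |x j| ≤ |x i|

/-- The singular values of a real matrix: square roots of the eigenvalues of `Aᵀ * A`. -/
noncomputable def singVals {m n : Type*} [Fintype m] [Fintype n] [DecidableEq n]
    (A : Matrix m n ℝ) : n → ℝ :=
  fun j => Real.sqrt ((show (Aᵀ * A).IsHermitian by simpa using Matrix.isHermitian_conjTranspose_mul_self A).eigenvalues j)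

/-- The Schatten p-(quasi)norm of a real matrix, for a real exponent `p > 0`. -/
noncomputable def schattenF {m n : Type*} [Fintype m] [Fintype n] [DecidableEq n]
    (p : ℝ) (A : Matrix m n ℝ) : ℝ :=
  (∑ j, singVals A j ^ p) ^ (1 / p)

/-- The spectral norm (Schatten ∞-norm): the largest singular value. -/
noncomputable def specNorm {m n : Type*} [Fintype m] [Fintype n] [DecidableEq n]
    (A : Matrix m n ℝ) : ℝ :=
  ⨆ j, singVals A j

open Classical in
/-- The Schatten p-norm with exponent `p ∈ (0,∞]`. -/
noncomputable def schattenE {m n : Type*} [Fintype m] [Fintype n] [DecidableEq n]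
    (p : ℝ≥0∞) (A : Matrix m n ℝ) : ℝ :=
  if p = ⊤ then specNorm A else schattenF p.toReal A

/-- Number of nonzero entries of a matrix. -/
noncomputable def nnz {m n : Type*} [Fintype m] [Fintype n] (A : Matrix m n ℝ) : ℕ :=
  (Finset.univ.filter fun ij : m × n => A ij.1 ij.2 ≠ 0).card

/- ---------- auxiliary lemmas ---------- -/

lemma isHermitian_transpose_mul_self' {m n : Type*} [Fintype m] (A : Matrix m n ℝ) :
    (Aᵀ * A).IsHermitian := by
  simpa using Matrix.isHermitian_conjTranspose_mul_self A

lemma real_add_rpow_le {t : ℝ} (ht : 1 ≤ t) {a b : ℝ} (ha : 0 ≤ a) (hb : 0 ≤ b) :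
    a ^ t + b ^ t ≤ (a + b) ^ t := by
  lift a to NNReal using ha
  lift b to NNReal using hb
  have h := NNReal.add_rpow_le_rpow_add a b ht
  have h2 := NNReal.coe_le_coe.mpr h
  push_cast [NNReal.coe_rpow] at h2
  exact_mod_cast h2

lemma real_rpow_add_le {t : ℝ} (ht0 : 0 ≤ t) (ht1 : t ≤ 1) {a b : ℝ} (ha : 0 ≤ a) (hb : 0 ≤ b) :
    (a + b) ^ t ≤ a ^ t + b ^ t := by
  lift a to NNReal using ha
  lift b to NNReal using hb
  have h := NNReal.rpow_add_le_add_rpow a b ht0 ht1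
  have h2 := NNReal.coe_le_coe.mpr h
  push_cast [NNReal.coe_rpow] at h2
  exact_mod_cast h2

lemma sum_rpow_le_rpow_sum {ι : Type*} {t : ℝ} (ht : 1 ≤ t) (s : Finset ι) (f : ι → ℝ)
    (hf : ∀ i ∈ s, 0 ≤ f i) : ∑ i ∈ s, f i ^ t ≤ (∑ i ∈ s, f i) ^ t := by
  classical
  induction s using Finset.induction_on with
  | empty => simp [Real.zero_rpow (by positivity : t ≠ 0)]
  | insert _ _ ha ih =>
    rename_i a s
    rw [Finset.sum_insert ha, Finset.sum_insert ha]
    have h1 := ih (fun i hi => hf i (Finset.mem_insert_of_mem hi))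
    have h2 : 0 ≤ ∑ i ∈ s, f i :=
      Finset.sum_nonneg fun i hi => hf i (Finset.mem_insert_of_mem hi)
    calc f a ^ t + ∑ i ∈ s, f i ^ t ≤ f a ^ t + (∑ i ∈ s, f i) ^ t := by linarith
      _ ≤ (f a + ∑ i ∈ s, f i) ^ t :=
        real_add_rpow_le ht (hf a (Finset.mem_insert_self a s)) h2

lemma eig_quad {n : ℕ} {H : Matrix (Fin n) (Fin n) ℝ} (hH : H.IsHermitian) {a b : ℝ}
    (h : H * H = a • H + b • (1 : Matrix (Fin n) (Fin n) ℝ)) (i : Fin n) :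
    hH.eigenvalues i ^ 2 = a * hH.eigenvalues i + b := by
  set μ := hH.eigenvalues i with hμ
  have h1 : H *ᵥ ⇑(hH.eigenvectorBasis i) = μ • ⇑(hH.eigenvectorBasis i) :=
    hH.mulVec_eigenvectorBasis i
  have h2 : (H * H) *ᵥ ⇑(hH.eigenvectorBasis i) = (μ * μ) • ⇑(hH.eigenvectorBasis i) := by
    rw [← mulVec_mulVec, h1, mulVec_smul, h1, smul_smul]
  rw [h] at h2
  have h3 : (a • H + b • (1 : Matrix (Fin n) (Fin n) ℝ)) *ᵥ ⇑(hH.eigenvectorBasis i)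
      = (a * μ + b) • ⇑(hH.eigenvectorBasis i) := by
    rw [add_mulVec, smul_mulVec, smul_mulVec, h1, one_mulVec, smul_smul, add_smul]
  rw [h3] at h2
  have h4 : (μ * μ - (a * μ + b)) • ⇑(hH.eigenvectorBasis i) = 0 := by
    rw [sub_smul, h2, sub_self]
  rcases smul_eq_zero.mp h4 with h5 | h5
  · nlinarith [h5]
  · exfalso
    apply hH.eigenvectorBasis.orthonormal.ne_zero i
    ext j
    exact congrFun h5 j

lemma trace_eq_sum_eigs {n : ℕ} {H : Matrix (Fin n) (Fin n) ℝ} (hH : H.IsHermitian) :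
    H.trace = ∑ i, hH.eigenvalues i := by
  conv_lhs => rw [hH.spectral_theorem, Unitary.conjStarAlgAut_apply]
  rw [Matrix.trace_mul_cycle]
  have hu : (star (hH.eigenvectorUnitary : Matrix (Fin n) (Fin n) ℝ)) *
      (hH.eigenvectorUnitary : Matrix (Fin n) (Fin n) ℝ) = 1 :=
    Unitary.coe_star_mul_self _
  rw [hu, Matrix.one_mul, Matrix.trace_diagonal]
  simp

lemma trace_transpose_mul_self {n : ℕ} (M : Matrix (Fin n) (Fin n) ℝ) :
    (Mᵀ * M).trace = ∑ ij : Fin n × Fin n, (M ij.1 ij.2) ^ 2 := by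
  rw [Fintype.sum_prod_type]
  have h : ∀ j, (Mᵀ * M) j j = ∑ i, (M i j) ^ 2 := by
    intro j
    simp [Matrix.mul_apply, Matrix.transpose_apply, sq]
  rw [Matrix.trace]
  simp only [Matrix.diag]
  rw [Finset.sum_congr rfl fun j _ => h j, Finset.sum_comm]

lemma key_ineq {q : ℝ} (hq : 1 ≤ q) {x : ℝ} (hx0 : 0 ≤ x) (hx1 : x ≤ 1) :
    (1 + x) ^ q + 1 ≤ 2 ^ q + x ^ q := by
  have hq0 : (0:ℝ) < q := lt_of_lt_of_le one_pos hq
  set g : ℝ → ℝ := fun t => (1 + t) ^ q - t ^ q with hg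
  have hcont : Continuous g := by
    have h1 : Continuous fun t : ℝ => t ^ q :=
      continuous_iff_continuousAt.mpr fun x => Real.continuousAt_rpow_const x q (Or.inr hq0.le)
    exact (h1.comp (continuous_const.add continuous_id)).sub h1
  have hderiv : ∀ t ∈ Set.Ioo (0:ℝ) 1,
      HasDerivAt g (q * (1 + t) ^ (q - 1) * 1 - q * t ^ (q - 1)) t := by
    intro t ht
    have ha : HasDerivAt (fun t : ℝ => (1 + t) ^ q) (q * (1 + t) ^ (q - 1) * 1) t :=
      (Real.hasDerivAt_rpow_const (Or.inl (by nlinarith [ht.1]))).comp t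
        ((hasDerivAt_id t).const_add 1)
    exact ha.sub (Real.hasDerivAt_rpow_const (Or.inl (ne_of_gt ht.1)))
  have hmono : MonotoneOn g (Set.Icc 0 1) := by
    apply monotoneOn_of_deriv_nonneg (convex_Icc 0 1) hcont.continuousOn
    · intro t ht
      rw [interior_Icc] at ht
      exact (hderiv t ht).differentiableAt.differentiableWithinAt
    · intro t ht
      rw [interior_Icc] at ht
      rw [(hderiv t ht).deriv]
      have h2 : t ^ (q - 1) ≤ (1 + t) ^ (q - 1) :=
        Real.rpow_le_rpow (le_of_lt ht.1) (by linarith) (by linarith)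
      nlinarith
  have h := hmono (Set.mem_Icc.mpr ⟨hx0, hx1⟩) (Set.mem_Icc.mpr ⟨zero_le_one, le_refl 1⟩) hx1
  simp only [hg] at h
  rw [Real.one_rpow] at h
  have h12 : (1:ℝ) + 1 = 2 := by norm_num
  rw [h12] at h
  linarith

lemma schattenF_nonneg {n : ℕ} (q : ℝ) (M : Matrix (Fin n) (Fin n) ℝ) :
    0 ≤ schattenF q M := by
  apply Real.rpow_nonneg
  exact Finset.sum_nonneg fun j _ => Real.rpow_nonneg (Real.sqrt_nonneg _) q

lemma frob_le_schatten {n : ℕ} {q : ℝ} (hq0 : 0 < q) (hq2 : q ≤ 2)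
    (M : Matrix (Fin n) (Fin n) ℝ) :
    (Mᵀ * M).trace ≤ (schattenF q M) ^ (2:ℝ) := by
  have hnn : ∀ j, 0 ≤ (isHermitian_transpose_mul_self' M).eigenvalues j :=
    fun j => Matrix.eigenvalues_conjTranspose_mul_self_nonneg M j
  have h1 : (Mᵀ * M).trace = ∑ j, (isHermitian_transpose_mul_self' M).eigenvalues j :=
    trace_eq_sum_eigs _
  have hqq : q * (2/q) = 2 := by field_simp
  have h2 : ∀ j, (isHermitian_transpose_mul_self' M).eigenvalues j
      = (singVals M j ^ q) ^ (2/q : ℝ) := by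
    intro j
    rw [singVals, ← Real.rpow_mul (Real.sqrt_nonneg _) q (2/q), hqq, Real.rpow_two,
      Real.sq_sqrt (hnn j)]
  have h3 : ∑ j, (singVals M j ^ q) ^ (2/q : ℝ) ≤ (∑ j, singVals M j ^ q) ^ (2/q : ℝ) :=
    sum_rpow_le_rpow_sum (by rw [le_div_iff₀ hq0]; linarith) _ _
      (fun j _ => Real.rpow_nonneg (Real.sqrt_nonneg _) q)
  have hS : 0 ≤ ∑ j, singVals M j ^ q :=
    Finset.sum_nonneg fun j _ => Real.rpow_nonneg (Real.sqrt_nonneg _) q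
  have h4 : (schattenF q M) ^ (2:ℝ) = (∑ j, singVals M j ^ q) ^ (2/q : ℝ) := by
    rw [schattenF, ← Real.rpow_mul hS]
    congr 1
    field_simp
  rw [h1, h4]
  calc ∑ j, (isHermitian_transpose_mul_self' M).eigenvalues j
      = ∑ j, (singVals M j ^ q) ^ (2/q : ℝ) := Finset.sum_congr rfl fun j _ => h2 j
    _ ≤ (∑ j, singVals M j ^ q) ^ (2/q : ℝ) := h3

lemma nnz_lower {n : ℕ} (A At : Matrix (Fin n) (Fin n) ℝ) {q : ℝ} (hq0 : 0 < q) (hq2 : q ≤ 2)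
    {c : ℝ} (hc0 : 0 < c) (hentry : ∀ i j, c ≤ A i j) {K : ℝ} (hK0 : 0 ≤ K)
    (hKsq : K ^ 2 ≤ (0.04 * (n:ℝ) ^ 2 + n) * c ^ 2)
    (hle : schattenF q (A - At) ≤ K) :
    0.96 * (n : ℝ) ^ 2 - n ≤ (nnz At : ℝ) := by
  classical
  by_contra hcon
  push_neg at hcon
  set Z := Finset.univ.filter (fun ij : Fin n × Fin n => At ij.1 ij.2 = 0) with hZ
  have h0 : (Finset.univ.filter fun ij : Fin n × Fin n => ¬ (At ij.1 ij.2 ≠ 0)) = Z := by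
    apply Finset.filter_congr
    intro ij _
    simp [not_not]
  have h1 : nnz At + Z.card = n * n := by
    have := Finset.card_filter_add_card_filter_not
      (s := (Finset.univ : Finset (Fin n × Fin n)))
      (p := fun ij : Fin n × Fin n => At ij.1 ij.2 ≠ 0)
    rw [h0] at this
    simpa [nnz] using this
  have hZR : (0.04 * (n:ℝ) ^ 2 + n) < Z.card := by
    have h2 : (nnz At : ℝ) + Z.card = (n:ℝ) ^ 2 := by
      have := congrArg (fun k : ℕ => (k : ℝ)) h1
      push_cast at this
      nlinarith [this]
    linarith
  have htr : (0.04 * (n:ℝ) ^ 2 + n) * c ^ 2 < ((A - At)ᵀ * (A - At)).trace := by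
    rw [trace_transpose_mul_self]
    have hZsub : ∀ ij ∈ Z, c ^ 2 ≤ ((A - At) ij.1 ij.2) ^ 2 := by
      intro ij hij
      have h2 : At ij.1 ij.2 = 0 := (Finset.mem_filter.mp hij).2
      have h3 : (A - At) ij.1 ij.2 = A ij.1 ij.2 := by simp [Matrix.sub_apply, h2]
      rw [h3]
      nlinarith [hentry ij.1 ij.2, hc0]
    calc (0.04 * (n:ℝ) ^ 2 + n) * c ^ 2 < Z.card * c ^ 2 := mul_lt_mul_of_pos_right hZR (pow_pos hc0 2)
      _ = ∑ _ij ∈ Z, c ^ 2 := by rw [Finset.sum_const, nsmul_eq_mul]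
      _ ≤ ∑ ij ∈ Z, ((A - At) ij.1 ij.2) ^ 2 := Finset.sum_le_sum hZsub
      _ ≤ ∑ ij : Fin n × Fin n, ((A - At) ij.1 ij.2) ^ 2 :=
        Finset.sum_le_sum_of_subset_of_nonneg (Finset.subset_univ _)
          (fun ij _ _ => sq_nonneg _)
  have hfs := frob_le_schatten hq0 hq2 (A - At)
  have hs0 : 0 ≤ schattenF q (A - At) := schattenF_nonneg _ _
  have hsq : (schattenF q (A - At)) ^ (2:ℝ) ≤ K ^ 2 := by
    rw [Real.rpow_two]
    nlinarith [hle, hs0, hK0]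
  linarith

lemma filter_card_eq_one {n : ℕ} (ν : Fin n → ℝ) (u t : ℝ) (hut : u ≠ t)
    (hval : ∀ j, ν j = u ∨ ν j = t) (hsum : ∑ j, ν j = (n:ℝ) * u + (t - u)) :
    (Finset.univ.filter fun j => ν j = t).card = 1 := by
  classical
  have hkn : (Finset.univ.filter fun j => ν j = t).card
      + (Finset.univ.filter fun j => ¬ ν j = t).card = n := by
    rw [Finset.card_filter_add_card_filter_not, Finset.card_univ, Fintype.card_fin]
  have hsplit : ∑ j, ν j = ((Finset.univ.filter fun j => ν j = t).card : ℝ) * t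
      + ((n:ℝ) - (Finset.univ.filter fun j => ν j = t).card) * u := by
    rw [← Finset.sum_filter_add_sum_filter_not Finset.univ (fun j => ν j = t)]
    have h1 : ∑ j ∈ Finset.univ.filter (fun j => ν j = t), ν j
        = ((Finset.univ.filter fun j => ν j = t).card : ℝ) * t := by
      rw [Finset.sum_congr rfl (fun j hj => (Finset.mem_filter.mp hj).2),
        Finset.sum_const, nsmul_eq_mul]
    have h2 : ∑ j ∈ Finset.univ.filter (fun j => ¬ ν j = t), ν j
        = ((n:ℝ) - (Finset.univ.filter fun j => ν j = t).card) * u := by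
      rw [Finset.sum_congr rfl (fun j hj => by
        rcases hval j with h | h
        · exact h
        · exact absurd h (Finset.mem_filter.mp hj).2), Finset.sum_const, nsmul_eq_mul]
      congr 1
      have : ((Finset.univ.filter fun j => ν j = t).card : ℝ)
          + ((Finset.univ.filter fun j => ¬ ν j = t).card : ℝ) = (n:ℝ) := by
        exact_mod_cast congrArg (fun k : ℕ => (k:ℝ)) hkn
      linarith
    rw [h1, h2]
  have hzero : (((Finset.univ.filter fun j => ν j = t).card : ℝ) - 1) * (t - u) = 0 := by
    linear_combination hsum - hsplit
  have h2 : ((Finset.univ.filter fun j => ν j = t).card : ℝ) = 1 := by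
    rcases mul_eq_zero.mp hzero with h | h
    · linarith
    · exact absurd (by linarith : u = t) hut
  exact_mod_cast h2

lemma sum_apply_two_values {n : ℕ} (ν : Fin n → ℝ) (u t : ℝ)
    (hval : ∀ j, ν j = u ∨ ν j = t)
    (hcard : (Finset.univ.filter fun j => ν j = t).card = 1) (hn : 1 ≤ n)
    (f : ℝ → ℝ) :
    ∑ j, f (ν j) = f t + ((n:ℝ) - 1) * f u := by
  classical
  rw [← Finset.sum_filter_add_sum_filter_not Finset.univ (fun j => ν j = t)]
  have h1 : ∑ j ∈ Finset.univ.filter (fun j => ν j = t), f (ν j) = f t := by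
    rw [Finset.sum_congr rfl (fun j hj => by rw [(Finset.mem_filter.mp hj).2]),
      Finset.sum_const, hcard, one_smul]
  have hcard2 : (Finset.univ.filter fun j => ¬ ν j = t).card = n - 1 := by
    have hkn : (Finset.univ.filter fun j => ν j = t).card
        + (Finset.univ.filter fun j => ¬ ν j = t).card = n := by
      rw [Finset.card_filter_add_card_filter_not, Finset.card_univ, Fintype.card_fin]
    omega
  have h2 : ∑ j ∈ Finset.univ.filter (fun j => ¬ ν j = t), f (ν j) = ((n:ℝ) - 1) * f u := by
    rw [Finset.sum_congr rfl (fun j hj => by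
      rcases hval j with h | h
      · rw [h]
      · exact absurd h (Finset.mem_filter.mp hj).2), Finset.sum_const, hcard2, nsmul_eq_mul,
      Nat.cast_sub hn, Nat.cast_one]
  rw [h1, h2]

set_option maxHeartbeats 2000000 in
/-- hard instance `A = I + n^{1/q-1}·J_n` for `0 < p < 1` and `p < q ≤ 2`. -/
theorem stmt18 (p q : ℝ) (hp0 : 0 < p) (hp1 : p < 1) (hpq : p < q) (hq2 : q ≤ 2)
    (n : ℕ) (hn : 2 ≤ n)
    (J : Matrix (Fin n) (Fin n) ℝ) (hJ : ∀ i j, J i j = 1)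
    (A : Matrix (Fin n) (Fin n) ℝ) (hA : A = 1 + (n : ℝ) ^ (1 / q - 1) • J)
    (ε : ℝ) (hε1 : (n : ℝ) ^ (-(1 / p - 1 / q)) < ε) (hε2 : ε ^ p ≤ 1 - 2 ^ (-p)) :
    schattenF p (A - 1) ≤ 2 * ε * schattenF p A ∧
    nnz (1 : Matrix (Fin n) (Fin n) ℝ) = n ∧
    (1 ≤ q → ∀ At : Matrix (Fin n) (Fin n) ℝ,
      schattenF q (A - At) ≤ 0.1 * schattenF q A →
      0.96 * (n : ℝ) ^ 2 - n ≤ (nnz At : ℝ)) ∧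
    (q < 1 → ∀ At : Matrix (Fin n) (Fin n) ℝ,
      schattenF q (A - At) ≤ 2 ^ (-(1 / q)) * 0.1 * schattenF q A →
      0.96 * (n : ℝ) ^ 2 - n ≤ (nnz At : ℝ)) := by
  classical
  have hq0 : 0 < q := lt_trans hp0 hpq
  have hn1 : 1 ≤ n := le_trans one_le_two hn
  have hn2 : (2:ℝ) ≤ (n:ℝ) := by exact_mod_cast hn
  have hn0 : (0:ℝ) < n := by linarith
  obtain ⟨c, hcdef⟩ : ∃ c : ℝ, c = (n : ℝ) ^ (1 / q - 1) := ⟨_, rfl⟩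
  rw [← hcdef] at hA
  have hc0 : 0 < c := hcdef ▸ Real.rpow_pos_of_pos hn0 _
  have hcn : c * (n:ℝ) = (n:ℝ) ^ (1/q) := by
    calc c * (n:ℝ) = (n:ℝ)^(1/q-1) * (n:ℝ)^(1:ℝ) := by rw [hcdef, Real.rpow_one]
      _ = (n:ℝ)^(1/q) := by rw [← Real.rpow_add hn0]; norm_num
  have hcn1 : 1 ≤ c * (n:ℝ) := by
    rw [hcn]
    calc (1:ℝ) = (n:ℝ)^(0:ℝ) := (Real.rpow_zero _).symm
      _ ≤ (n:ℝ)^(1/q) := Real.rpow_le_rpow_of_exponent_le (by linarith) (by positivity)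
  have hcnq : (c*(n:ℝ))^q = (n:ℝ) := by
    rw [hcn, ← Real.rpow_mul hn0.le, one_div_mul_cancel hq0.ne', Real.rpow_one]
  have hJJ : J * J = (n:ℝ) • J := by
    ext i j
    simp [Matrix.mul_apply, hJ]
  have hJt : Jᵀ = J := by
    ext i j
    simp [Matrix.transpose_apply, hJ]
  have htrJ : J.trace = (n:ℝ) := by
    simp [Matrix.trace, Matrix.diag, hJ]
  have hentry : ∀ i j, c ≤ A i j := by
    intro i j
    have h : A i j = (if i = j then 1 else 0) + c := by
      rw [hA]
      simp [Matrix.add_apply, Matrix.one_apply, Matrix.smul_apply, hJ]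
    rw [h]
    split_ifs <;> linarith
  -- analysis of A - 1
  have hM : A - 1 = c • J := by rw [hA]; abel
  have hH1eq : (A - 1)ᵀ * (A - 1) = (c * c * (n:ℝ)) • J := by
    rw [hM, Matrix.transpose_smul, hJt, Matrix.smul_mul, Matrix.mul_smul, hJJ]
    module
  have hval1 : ∀ i, (isHermitian_transpose_mul_self' (A - 1)).eigenvalues i = 0
      ∨ (isHermitian_transpose_mul_self' (A - 1)).eigenvalues i = c*c*(n:ℝ)*(n:ℝ) := by
    intro i
    have hquad : (isHermitian_transpose_mul_self' (A - 1)).eigenvalues i ^ 2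
        = (c*c*(n:ℝ)*(n:ℝ)) * (isHermitian_transpose_mul_self' (A - 1)).eigenvalues i
          + 0 := by
      apply eig_quad
      rw [hH1eq]
      simp only [Matrix.smul_mul, Matrix.mul_smul, hJJ]
      module
    have h2 : (isHermitian_transpose_mul_self' (A - 1)).eigenvalues i *
        ((isHermitian_transpose_mul_self' (A - 1)).eigenvalues i - c*c*(n:ℝ)*(n:ℝ)) = 0 := by
      linear_combination hquad
    rcases mul_eq_zero.mp h2 with h3 | h3
    · exact Or.inl h3
    · exact Or.inr (by linarith)
  have hsum1 : ∑ j, (isHermitian_transpose_mul_self' (A - 1)).eigenvalues j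
      = (n:ℝ) * 0 + (c*c*(n:ℝ)*(n:ℝ) - 0) := by
    rw [← trace_eq_sum_eigs]
    rw [hH1eq, Matrix.trace_smul, htrJ, smul_eq_mul]
    ring
  have hcard1 := filter_card_eq_one _ 0 (c*c*(n:ℝ)*(n:ℝ))
    (ne_of_lt (by positivity)) hval1 hsum1
  have hsum1p : ∀ r : ℝ, r ≠ 0 → ∑ j, singVals (A-1) j ^ r = (c*(n:ℝ))^r := by
    intro r hr
    have h := sum_apply_two_values _ 0 (c*c*(n:ℝ)*(n:ℝ)) hval1 hcard1 hn1
      (fun x => Real.sqrt x ^ r)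
    simp only [singVals]
    rw [h, Real.sqrt_zero, Real.zero_rpow hr, mul_zero, add_zero]
    congr 1
    rw [show c*c*(n:ℝ)*(n:ℝ) = (c*(n:ℝ))*(c*(n:ℝ)) by ring,
      Real.sqrt_mul_self (by positivity)]
  -- analysis of A
  obtain ⟨d, hddef⟩ : ∃ d : ℝ, d = 2*c + c*c*(n:ℝ) := ⟨_, rfl⟩
  have hd0 : 0 < d := by rw [hddef]; positivity
  have hdn : 0 < d * (n:ℝ) := by positivity
  have hsqrt1dn : Real.sqrt (1 + d*(n:ℝ)) = 1 + c*(n:ℝ) := by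
    rw [show (1:ℝ) + d*(n:ℝ) = (1 + c*(n:ℝ))*(1 + c*(n:ℝ)) by rw [hddef]; ring,
      Real.sqrt_mul_self (by positivity)]
  have hAt : Aᵀ = A := by
    rw [hA, Matrix.transpose_add, Matrix.transpose_one, Matrix.transpose_smul, hJt]
  have hH2eq : Aᵀ * A = 1 + d • J := by
    rw [hAt, hA]
    simp only [Matrix.add_mul, Matrix.mul_add, Matrix.one_mul, Matrix.mul_one,
      Matrix.smul_mul, Matrix.mul_smul, hJJ]
    rw [hddef]
    module
  have hμval : ∀ i, (isHermitian_transpose_mul_self' A).eigenvalues i = 1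
      ∨ (isHermitian_transpose_mul_self' A).eigenvalues i = 1 + d*(n:ℝ) := by
    intro i
    have hquad : (isHermitian_transpose_mul_self' A).eigenvalues i ^ 2
        = (2 + d*(n:ℝ)) * (isHermitian_transpose_mul_self' A).eigenvalues i
          + (-(1 + d*(n:ℝ))) := by
      apply eig_quad
      rw [hH2eq]
      simp only [Matrix.add_mul, Matrix.mul_add, Matrix.one_mul, Matrix.mul_one,
        Matrix.smul_mul, Matrix.mul_smul, hJJ]
      module
    have h2 : ((isHermitian_transpose_mul_self' A).eigenvalues i - 1) *
        ((isHermitian_transpose_mul_self' A).eigenvalues i - (1 + d*(n:ℝ))) = 0 := by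
      linear_combination hquad
    rcases mul_eq_zero.mp h2 with h3 | h3
    · exact Or.inl (by linarith)
    · exact Or.inr (by linarith)
  have hμsum : ∑ j, (isHermitian_transpose_mul_self' A).eigenvalues j
      = (n:ℝ) * 1 + ((1 + d*(n:ℝ)) - 1) := by
    rw [← trace_eq_sum_eigs]
    rw [hH2eq, Matrix.trace_add, Matrix.trace_smul, htrJ,
      Matrix.trace_one, smul_eq_mul]
    simp [Fintype.card_fin]
  have hcard2 := filter_card_eq_one _ 1 (1 + d*(n:ℝ)) (by intro h; linarith) hμval hμsum
  have hsum2r : ∀ r : ℝ, ∑ j, singVals A j ^ r = (1 + c*(n:ℝ))^r + ((n:ℝ) - 1) := by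
    intro r
    have h := sum_apply_two_values _ 1 (1 + d*(n:ℝ)) hμval hcard2 hn1
      (fun x => Real.sqrt x ^ r)
    simp only [singVals]
    rw [h, Real.sqrt_one, Real.one_rpow, mul_one, hsqrt1dn]
  have hS0 : ∀ r : ℝ, (0:ℝ) ≤ (1 + c*(n:ℝ))^r + ((n:ℝ) - 1) := by
    intro r
    have := Real.rpow_nonneg (by positivity : (0:ℝ) ≤ 1 + c*(n:ℝ)) r
    linarith
  refine ⟨?_, ?_, ?_, ?_⟩
  · -- part 1
    have hS1 : schattenF p (A-1) = c * (n:ℝ) := by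
      rw [schattenF, hsum1p p hp0.ne', ← Real.rpow_mul (by positivity),
        mul_one_div_cancel hp0.ne', Real.rpow_one]
    have hAlow : (n:ℝ)^(1/p) ≤ schattenF p A := by
      have hsum : (n:ℝ) ≤ ∑ j, singVals A j ^ p := by
        rw [hsum2r p]
        have h1 : (1:ℝ) ≤ (1 + c*(n:ℝ))^p := by
          calc (1:ℝ) = 1 ^ p := (Real.one_rpow p).symm
            _ ≤ (1 + c*(n:ℝ))^p := Real.rpow_le_rpow zero_le_one (by linarith) hp0.le
        linarith
      calc (n:ℝ)^(1/p) ≤ (∑ j, singVals A j ^ p)^(1/p) :=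
          Real.rpow_le_rpow hn0.le hsum (by positivity)
        _ = schattenF p A := rfl
    have hεpos : 0 < ε := lt_trans (Real.rpow_pos_of_pos hn0 _) hε1
    rw [hS1]
    have h1 : c * (n:ℝ) ≤ ε * (n:ℝ)^(1/p) := by
      rw [hcn, show (n:ℝ)^(1/q) = (n:ℝ)^(-(1/p - 1/q)) * (n:ℝ)^(1/p) by
        rw [← Real.rpow_add hn0]; congr 1; ring]
      exact mul_le_mul_of_nonneg_right hε1.le (Real.rpow_nonneg hn0.le _)
    calc c * (n:ℝ) ≤ ε * (n:ℝ)^(1/p) := h1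
      _ ≤ ε * schattenF p A := mul_le_mul_of_nonneg_left hAlow hεpos.le
      _ ≤ 2 * ε * schattenF p A := by
          nlinarith [mul_nonneg hεpos.le (schattenF_nonneg p A)]
  · -- part 2 : nnz 1 = n
    have himg : (Finset.univ.filter
        fun ij : Fin n × Fin n => (1 : Matrix (Fin n) (Fin n) ℝ) ij.1 ij.2 ≠ 0)
        = Finset.univ.image (fun i : Fin n => (i, i)) := by
      ext ij
      simp only [Finset.mem_filter, Finset.mem_univ, true_and, Finset.mem_image]
      constructor
      · intro h
        refine ⟨ij.1, ?_⟩
        have h2 : ij.1 = ij.2 := by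
          by_contra hne
          exact h (Matrix.one_apply_ne hne)
        exact Prod.ext rfl h2
      · rintro ⟨i, rfl⟩
        simp [Matrix.one_apply_eq]
    unfold nnz
    rw [himg, Finset.card_image_of_injective _ (fun a b h => (Prod.ext_iff.mp h).1),
      Finset.card_univ, Fintype.card_fin]
  · -- part 3 : 1 ≤ q
    intro hq1 At hle
    have hWle : schattenF q A ≤ 2 * (n:ℝ)^(1/q) := by
      have hWeq : schattenF q A = ((1 + c*(n:ℝ))^q + ((n:ℝ) - 1)) ^ (1/q) := by
        rw [schattenF, hsum2r q]
      have hx0 : (0:ℝ) ≤ (c*(n:ℝ))⁻¹ := by positivity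
      have hx1 : (c*(n:ℝ))⁻¹ ≤ 1 := inv_le_one_of_one_le₀ hcn1
      have hki := key_ineq hq1 hx0 hx1
      have hmul := mul_le_mul_of_nonneg_right hki
        (le_of_lt (by positivity : (0:ℝ) < (c*(n:ℝ))^q))
      have e1 : (1 + (c*(n:ℝ))⁻¹)^q * (c*(n:ℝ))^q = (1 + c*(n:ℝ))^q := by
        rw [← Real.mul_rpow (by positivity) (by positivity)]
        congr 1
        field_simp
        ring
      have e2 : ((c*(n:ℝ))⁻¹)^q * (c*(n:ℝ))^q = 1 := by
        rw [← Real.mul_rpow (by positivity) (by positivity),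
          inv_mul_cancel₀ (by positivity : c*(n:ℝ) ≠ 0), Real.one_rpow]
      have hmul' : (1 + c*(n:ℝ))^q + (n:ℝ) ≤ 2^q * (n:ℝ) + 1 := by
        calc (1 + c*(n:ℝ))^q + (n:ℝ)
            = (1 + (c*(n:ℝ))⁻¹)^q * (c*(n:ℝ))^q + 1 * (c*(n:ℝ))^q := by
              rw [e1, one_mul, hcnq]
          _ = ((1 + (c*(n:ℝ))⁻¹)^q + 1) * (c*(n:ℝ))^q := by ring
          _ ≤ (2^q + ((c*(n:ℝ))⁻¹)^q) * (c*(n:ℝ))^q := hmul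
          _ = 2^q * (c*(n:ℝ))^q + ((c*(n:ℝ))⁻¹)^q * (c*(n:ℝ))^q := by ring
          _ = 2^q * (n:ℝ) + 1 := by rw [e2, hcnq]
      have hSle : (1 + c*(n:ℝ))^q + ((n:ℝ) - 1) ≤ 2^q * (n:ℝ) := by linarith
      rw [hWeq]
      calc ((1 + c*(n:ℝ))^q + ((n:ℝ) - 1))^(1/q) ≤ (2^q * (n:ℝ))^(1/q) :=
          Real.rpow_le_rpow (hS0 q) hSle (by positivity)
        _ = 2 * (n:ℝ)^(1/q) := by
          rw [Real.mul_rpow (by positivity) hn0.le,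
            ← Real.rpow_mul (by norm_num : (0:ℝ) ≤ 2), mul_one_div_cancel hq0.ne',
            Real.rpow_one]
    apply nnz_lower A At hq0 hq2 hc0 hentry
      (mul_nonneg (by norm_num) (schattenF_nonneg _ _)) ?_ hle
    have hW0 : 0 ≤ schattenF q A := schattenF_nonneg _ _
    have h1 : (0.1 * schattenF q A)^2 ≤ (0.1 * (2 * (n:ℝ)^(1/q)))^2 := by
      apply pow_le_pow_left₀ (by positivity) (by linarith [hWle]) 2
    have h2 : ((n:ℝ)^(1/q))^2 = (c*(n:ℝ))^2 := by rw [hcn]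
    have h3 : (0:ℝ) ≤ (n:ℝ) * c^2 := by positivity
    calc (0.1 * schattenF q A)^2 ≤ (0.1 * (2 * (n:ℝ)^(1/q)))^2 := h1
      _ = 0.04 * ((n:ℝ)^(1/q))^2 := by ring
      _ = 0.04 * (c*(n:ℝ))^2 := by rw [h2]
      _ ≤ (0.04 * (n:ℝ)^2 + n) * c^2 := by nlinarith [h3]
  · -- part 4 : q < 1
    intro hq1 At hle
    have hWle : schattenF q A ≤ 2^(1/q) * (n:ℝ)^(1/q) := by
      have hWeq : schattenF q A = ((1 + c*(n:ℝ))^q + ((n:ℝ) - 1)) ^ (1/q) := by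
        rw [schattenF, hsum2r q]
      have h1 : (1 + c*(n:ℝ))^q ≤ 1 + (n:ℝ) := by
        calc (1 + c*(n:ℝ))^q ≤ 1^q + (c*(n:ℝ))^q :=
            real_rpow_add_le hq0.le hq1.le zero_le_one (by positivity)
          _ = 1 + (n:ℝ) := by rw [Real.one_rpow, hcnq]
      have hSle : (1 + c*(n:ℝ))^q + ((n:ℝ) - 1) ≤ 2 * (n:ℝ) := by linarith
      rw [hWeq]
      calc ((1 + c*(n:ℝ))^q + ((n:ℝ) - 1))^(1/q) ≤ (2 * (n:ℝ))^(1/q) :=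
          Real.rpow_le_rpow (hS0 q) hSle (by positivity)
        _ = 2^(1/q) * (n:ℝ)^(1/q) := Real.mul_rpow (by norm_num) hn0.le
    have hW0 : 0 ≤ schattenF q A := schattenF_nonneg _ _
    have e3 : (2:ℝ)^(-(1/q)) * 2^(1/q) = 1 := by
      rw [← Real.rpow_add (by norm_num : (0:ℝ) < 2)]
      norm_num
    have hKle : 2^(-(1/q)) * 0.1 * schattenF q A ≤ 0.1 * (n:ℝ)^(1/q) := by
      calc 2^(-(1/q)) * 0.1 * schattenF q A
          ≤ 2^(-(1/q)) * 0.1 * (2^(1/q) * (n:ℝ)^(1/q)) := by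
            apply mul_le_mul_of_nonneg_left hWle
              (mul_nonneg (Real.rpow_nonneg (by norm_num) _) (by norm_num))
        _ = 0.1 * (n:ℝ)^(1/q) * ((2:ℝ)^(-(1/q)) * 2^(1/q)) := by ring
        _ = 0.1 * (n:ℝ)^(1/q) := by rw [e3, mul_one]
    apply nnz_lower A At hq0 hq2 hc0 hentry
      (mul_nonneg (mul_nonneg (Real.rpow_nonneg (by norm_num) _) (by norm_num))
        (schattenF_nonneg _ _)) ?_ hle
    have hK0 : 0 ≤ 2^(-(1/q)) * 0.1 * schattenF q A :=
      mul_nonneg (mul_nonneg (Real.rpow_nonneg (by norm_num) _) (by norm_num))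
        (schattenF_nonneg _ _)
    have h1 : (2^(-(1/q)) * 0.1 * schattenF q A)^2 ≤ (0.1 * (n:ℝ)^(1/q))^2 :=
      pow_le_pow_left₀ hK0 hKle 2
    have h2 : ((n:ℝ)^(1/q))^2 = (c*(n:ℝ))^2 := by rw [hcn]
    have h3 : (0:ℝ) ≤ (n:ℝ) * c^2 := by positivity
    calc (2^(-(1/q)) * 0.1 * schattenF q A)^2 ≤ (0.1 * (n:ℝ)^(1/q))^2 := h1
      _ = 0.01 * ((n:ℝ)^(1/q))^2 := by ring
      _ = 0.01 * (c*(n:ℝ))^2 := by rw [h2]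
      _ ≤ (0.04 * (n:ℝ)^2 + n) * c^2 := by nlinarith [h3]
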